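/- Let C₁, C₂ be real constants and let Ω = {(x, y) ∈ ℝ² : C₁ x + y + C₂ ≠ 0}. Define u(x, y) = −2C₁/(C₁ x + y + C₂) and v(x, y) = −2/(C₁ x + y + C₂) on Ω. Then u_y = v_x on Ω and the pair (u, v) satisfies all four equations: (1) u_{xx} + u_{yy} − u u_x − v u_y = 0; (2) v_{xx} + v_{yy} − u v_x − v v_y = 0; (3) u² − 2u_x − v² + 2v_y = 0; (4) u v − u_y − v_x = 0. -/

import Mathlib

noncomputable section

/-- Partial derivative in the `x`-direction of a function on `ℝ²`. -/
noncomputable def px (f : ℝ × ℝ → ℝ) (p : ℝ × ℝ) : ℝ := fderiv ℝ f p (1, 0)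

/-- Partial derivative in the `y`-direction of a function on `ℝ²`. -/
noncomputable def py (f : ℝ × ℝ → ℝ) (p : ℝ × ℝ) : ℝ := fderiv ℝ f p (0, 1)

namespace Stmt13Aux

/-- The linear part of the affine map `(x,y) ↦ C₁x + y + C₂`. -/
def ell (C₁ : ℝ) : (ℝ × ℝ) →L[ℝ] ℝ :=
  C₁ • ContinuousLinearMap.fst ℝ ℝ ℝ + ContinuousLinearMap.snd ℝ ℝ ℝ

lemma ell_apply (C₁ : ℝ) (w : ℝ × ℝ) : ell C₁ w = C₁ * w.1 + w.2 := by
  simp [ell]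

lemma hasFDerivAt_lin (C₁ C₂ : ℝ) (p : ℝ × ℝ) :
    HasFDerivAt (fun q : ℝ × ℝ => C₁ * q.1 + q.2 + C₂) (ell C₁) p := by
  have h1 : HasFDerivAt (fun q : ℝ × ℝ => q.1) (ContinuousLinearMap.fst ℝ ℝ ℝ) p :=
    hasFDerivAt_fst
  have h2 : HasFDerivAt (fun q : ℝ × ℝ => q.2) (ContinuousLinearMap.snd ℝ ℝ ℝ) p :=
    hasFDerivAt_snd
  simpa [ell] using ((h1.const_mul C₁).add h2).add_const C₂

lemma key (C₁ C₂ c : ℝ) (n : ℕ) (p : ℝ × ℝ) (hp : C₁ * p.1 + p.2 + C₂ ≠ 0) :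
    HasFDerivAt (fun q : ℝ × ℝ => c / (C₁ * q.1 + q.2 + C₂) ^ n)
      (((-c * n) / (C₁ * p.1 + p.2 + C₂) ^ (n + 1)) • ell C₁) p := by
  have hz := (hasDerivAt_zpow (-(n : ℤ)) (C₁ * p.1 + p.2 + C₂) (Or.inl hp)).const_mul c
  have h := hz.comp_hasFDerivAt p (hasFDerivAt_lin C₁ C₂ p)
  simp only [Function.comp_def] at h
  have hfun : (fun q : ℝ × ℝ => c * (C₁ * q.1 + q.2 + C₂) ^ (-(n : ℤ)))
      = fun q : ℝ × ℝ => c / (C₁ * q.1 + q.2 + C₂) ^ n := by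
    funext q
    rw [zpow_neg, zpow_natCast, div_eq_mul_inv]
  rw [hfun] at h
  apply h.congr_fderiv
  congr 1
  rw [show (-(n : ℤ) - 1) = -((n + 1 : ℕ) : ℤ) by push_cast; ring, zpow_neg, zpow_natCast]
  push_cast
  field_simp

lemma px_eq (C₁ C₂ c : ℝ) (n : ℕ) (p : ℝ × ℝ) (hp : C₁ * p.1 + p.2 + C₂ ≠ 0) :
    px (fun q : ℝ × ℝ => c / (C₁ * q.1 + q.2 + C₂) ^ n) p
      = (-c * n * C₁) / (C₁ * p.1 + p.2 + C₂) ^ (n + 1) := by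
  rw [px, (key C₁ C₂ c n p hp).fderiv]
  simp [ell_apply]
  ring

lemma py_eq (C₁ C₂ c : ℝ) (n : ℕ) (p : ℝ × ℝ) (hp : C₁ * p.1 + p.2 + C₂ ≠ 0) :
    py (fun q : ℝ × ℝ => c / (C₁ * q.1 + q.2 + C₂) ^ n) p
      = (-c * n) / (C₁ * p.1 + p.2 + C₂) ^ (n + 1) := by
  rw [py, (key C₁ C₂ c n p hp).fderiv]
  simp [ell_apply]

lemma eventually_ne (C₁ C₂ : ℝ) (p : ℝ × ℝ) (hp : C₁ * p.1 + p.2 + C₂ ≠ 0) :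
    ∀ᶠ q in nhds p, C₁ * q.1 + q.2 + C₂ ≠ 0 := by
  have hcont : Continuous fun q : ℝ × ℝ => C₁ * q.1 + q.2 + C₂ := by continuity
  have hOpen : IsOpen {q : ℝ × ℝ | C₁ * q.1 + q.2 + C₂ ≠ 0} :=
    isOpen_compl_singleton.preimage hcont
  exact hOpen.mem_nhds hp

lemma px_congr {f g : ℝ × ℝ → ℝ} {p : ℝ × ℝ} (h : f =ᶠ[nhds p] g) : px f p = px g p := by
  rw [px, px, h.fderiv_eq]

lemma py_congr {f g : ℝ × ℝ → ℝ} {p : ℝ × ℝ} (h : f =ᶠ[nhds p] g) : py f p = py g p := by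
  rw [py, py, h.fderiv_eq]

end Stmt13Aux

open Stmt13Aux in
/-- the pair `u = −2C₁/(C₁x + y + C₂)`, `v = −2/(C₁x + y + C₂)` satisfies
`u_y = v_x` and the four generalized-harmonic-morphism equations (1)–(4) on the set
where `C₁ x + y + C₂ ≠ 0`. -/
theorem stmt_13 (C₁ C₂ : ℝ) (u v : ℝ × ℝ → ℝ)
    (hu : ∀ p : ℝ × ℝ, u p = -2 * C₁ / (C₁ * p.1 + p.2 + C₂))
    (hv : ∀ p : ℝ × ℝ, v p = -2 / (C₁ * p.1 + p.2 + C₂)) :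
    ∀ p ∈ {q : ℝ × ℝ | C₁ * q.1 + q.2 + C₂ ≠ 0},
      py u p = px v p ∧
      px (px u) p + py (py u) p - u p * px u p - v p * py u p = 0 ∧
      px (px v) p + py (py v) p - u p * px v p - v p * py v p = 0 ∧
      (u p) ^ 2 - 2 * px u p - (v p) ^ 2 + 2 * py v p = 0 ∧
      u p * v p - py u p - px v p = 0 := by
  intro p hp
  have hp : C₁ * p.1 + p.2 + C₂ ≠ 0 := hp
  have hu' : u = fun q : ℝ × ℝ => (-2 * C₁) / (C₁ * q.1 + q.2 + C₂) ^ 1 := by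
    funext q; rw [hu q, pow_one]
  have hv' : v = fun q : ℝ × ℝ => (-2 : ℝ) / (C₁ * q.1 + q.2 + C₂) ^ 1 := by
    funext q; rw [hv q, pow_one]
  set s := C₁ * p.1 + p.2 + C₂ with hs
  -- first derivatives
  have hux : px u p = (2 * C₁ * C₁) / s ^ 2 := by
    rw [hu', px_eq C₁ C₂ _ 1 p hp, ← hs]; push_cast; ring_nf
  have huy : py u p = (2 * C₁) / s ^ 2 := by
    rw [hu', py_eq C₁ C₂ _ 1 p hp, ← hs]; push_cast; ring_nf
  have hvx : px v p = (2 * C₁) / s ^ 2 := by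
    rw [hv', px_eq C₁ C₂ _ 1 p hp, ← hs]; push_cast; ring_nf
  have hvy : py v p = (2 : ℝ) / s ^ 2 := by
    rw [hv', py_eq C₁ C₂ _ 1 p hp, ← hs]; push_cast; ring_nf
  -- second derivatives
  have hpxu : px u =ᶠ[nhds p] fun q : ℝ × ℝ => (2 * C₁ * C₁) / (C₁ * q.1 + q.2 + C₂) ^ 2 := by
    filter_upwards [eventually_ne C₁ C₂ p hp] with q hq
    rw [hu', px_eq C₁ C₂ _ 1 q hq]; push_cast; ring_nf
  have hpyu : py u =ᶠ[nhds p] fun q : ℝ × ℝ => (2 * C₁) / (C₁ * q.1 + q.2 + C₂) ^ 2 := by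
    filter_upwards [eventually_ne C₁ C₂ p hp] with q hq
    rw [hu', py_eq C₁ C₂ _ 1 q hq]; push_cast; ring_nf
  have hpxv : px v =ᶠ[nhds p] fun q : ℝ × ℝ => (2 * C₁) / (C₁ * q.1 + q.2 + C₂) ^ 2 := by
    filter_upwards [eventually_ne C₁ C₂ p hp] with q hq
    rw [hv', px_eq C₁ C₂ _ 1 q hq]; push_cast; ring_nf
  have hpyv : py v =ᶠ[nhds p] fun q : ℝ × ℝ => (2 : ℝ) / (C₁ * q.1 + q.2 + C₂) ^ 2 := by
    filter_upwards [eventually_ne C₁ C₂ p hp] with q hq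
    rw [hv', py_eq C₁ C₂ _ 1 q hq]; push_cast; ring_nf
  have huxx : px (px u) p = (-4 * C₁ ^ 3) / s ^ 3 := by
    rw [px_congr hpxu, px_eq C₁ C₂ _ 2 p hp, ← hs]; push_cast; ring_nf
  have huyy : py (py u) p = (-4 * C₁) / s ^ 3 := by
    rw [py_congr hpyu, py_eq C₁ C₂ _ 2 p hp, ← hs]; push_cast; ring_nf
  have hvxx : px (px v) p = (-4 * C₁ ^ 2) / s ^ 3 := by
    rw [px_congr hpxv, px_eq C₁ C₂ _ 2 p hp, ← hs]; push_cast; ring_nf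
  have hvyy : py (py v) p = (-4 : ℝ) / s ^ 3 := by
    rw [py_congr hpyv, py_eq C₁ C₂ _ 2 p hp, ← hs]; push_cast; ring_nf
  rw [hu p, hv p, hux, huy, hvx, hvy, huxx, huyy, hvxx, hvyy, ← hs]
  refine ⟨rfl, ?_, ?_, ?_, ?_⟩ <;> field_simp <;> ring
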